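/- Let M be a convex, centrally symmetric subset of a normed space X, let T : span(M) → ℝ^m be linear, and let Φ : ℝ^m → X be an arbitrary map. Then sup_{x ∈ M} ‖x − Φ(T x)‖ ≥ sup{‖x‖ : x ∈ M, T x = 0}. -/

import Mathlib

open ENNReal

theorem abstract_recovery_lower_bound
    {X : Type*} [NormedAddCommGroup X] [NormedSpace ℝ X]
    (M : Set X) (hconvex : Convex ℝ M) (hsym : ∀ x ∈ M, -x ∈ M)
    (m : ℕ) (T : (Submodule.span ℝ M) →ₗ[ℝ] (Fin m → ℝ))
    (Φ : (Fin m → ℝ) → X) :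
    (⨆ (x : X) (hx : x ∈ M),
        (‖x - Φ (T ⟨x, Submodule.subset_span hx⟩)‖₊ : ℝ≥0∞))
      ≥ ⨆ (x : X) (hx : x ∈ M) (_ : T ⟨x, Submodule.subset_span hx⟩ = 0),
          (‖x‖₊ : ℝ≥0∞) := by
  refine iSup_le fun x => iSup_le fun hx => iSup_le fun hT => ?_
  have hx' : -x ∈ M := hsym x hx
  have hsub : (⟨-x, Submodule.subset_span hx'⟩ : Submodule.span ℝ M)
      = -⟨x, Submodule.subset_span hx⟩ := rfl
  have hT' : T ⟨-x, Submodule.subset_span hx'⟩ = 0 := by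
    rw [hsub, map_neg, hT, neg_zero]
  set c := Φ (0 : Fin m → ℝ) with hc
  have h1 : (‖x - Φ (T ⟨x, Submodule.subset_span hx⟩)‖₊ : ℝ≥0∞)
      ≤ ⨆ (y : X) (hy : y ∈ M),
        (‖y - Φ (T ⟨y, Submodule.subset_span hy⟩)‖₊ : ℝ≥0∞) :=
    le_iSup₂ (f := fun (y : X) (hy : y ∈ M) =>
      (‖y - Φ (T ⟨y, Submodule.subset_span hy⟩)‖₊ : ℝ≥0∞)) x hx
  have h2 : (‖-x - Φ (T ⟨-x, Submodule.subset_span hx'⟩)‖₊ : ℝ≥0∞)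
      ≤ ⨆ (y : X) (hy : y ∈ M),
        (‖y - Φ (T ⟨y, Submodule.subset_span hy⟩)‖₊ : ℝ≥0∞) :=
    le_iSup₂ (f := fun (y : X) (hy : y ∈ M) =>
      (‖y - Φ (T ⟨y, Submodule.subset_span hy⟩)‖₊ : ℝ≥0∞)) (-x) hx'
  rw [hT] at h1
  rw [hT'] at h2
  have key : (‖x‖₊ : ℝ≥0∞) ≤ max (‖x - c‖₊ : ℝ≥0∞) (‖-x - c‖₊ : ℝ≥0∞) := by
    have hreal : ‖x‖ ≤ max ‖x - c‖ ‖-x - c‖ := by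
      have : (2 : ℝ) * ‖x‖ ≤ ‖x - c‖ + ‖-x - c‖ := by
        calc (2 : ℝ) * ‖x‖ = ‖(x - c) - (-x - c)‖ := by
              rw [sub_sub_sub_cancel_right, sub_neg_eq_add]
              rw [show x + x = (2:ℝ) • x by rw [two_smul]]
              rw [norm_smul]; simp
          _ ≤ ‖x - c‖ + ‖-x - c‖ := norm_sub_le _ _
      rcases le_total ‖x - c‖ ‖-x - c‖ with h | h
      · refine le_max_of_le_right ?_; linarith
      · refine le_max_of_le_left ?_; linarith
    rcases le_total ‖x - c‖ ‖-x - c‖ with h | h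
    · refine le_max_of_le_right ?_
      exact_mod_cast (by rw [← NNReal.coe_le_coe, coe_nnnorm, coe_nnnorm]; simpa [h] using hreal : ‖x‖₊ ≤ ‖-x - c‖₊)
    · refine le_max_of_le_left ?_
      exact_mod_cast (by rw [← NNReal.coe_le_coe, coe_nnnorm, coe_nnnorm]; simpa [max_eq_left h] using hreal : ‖x‖₊ ≤ ‖x - c‖₊)
  calc (‖x‖₊ : ℝ≥0∞) ≤ max (‖x - c‖₊ : ℝ≥0∞) (‖-x - c‖₊ : ℝ≥0∞) := key
    _ ≤ _ := max_le h1 h2
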